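/- Let E be a category with finite limits, i : D ⥤ E a fully faithful functor admitting a left adjoint L, F = L ⋙ i the associated idempotent endofunctor with unit η, and assume F preserves finite limits. If u is an F-equivalence and g is F-local, then u is orthogonal to g (u ⊥ g). -/
import Mathlib


open CategoryTheory Limits

/-- `f` is orthogonal to `g` (`f ⊥ g`): every commutative square from `f` to `g` admits a
unique diagonal filler. -/
def Orth {E : Type*} [Category E] {A B X Y : E} (f : A ⟶ B) (g : X ⟶ Y) : Prop :=
  ∀ (u : A ⟶ X) (v : B ⟶ Y), u ≫ g = f ≫ v →
    ∃! d : B ⟶ X, f ≫ d = u ∧ d ≫ g = v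

/-- For a reflective localization `L ⊣ i` with `F = L ⋙ i` preserving finite
limits, every `F`-equivalence is orthogonal to every `F`-local map. -/
theorem goodwillie_stmt_2 {D E : Type*} [Category D] [Category E] [HasFiniteLimits E]
    (L : E ⥤ D) (i : D ⥤ E) [i.Full] [i.Faithful] (adj : L ⊣ i)
    [PreservesFiniteLimits (L ⋙ i)]
    {A B X Y : E} (u : A ⟶ B) (g : X ⟶ Y)
    (hu : IsIso ((L ⋙ i).map u))
    (hg : IsPullback (adj.unit.app X) g ((L ⋙ i).map g) (adj.unit.app Y)) :
    Orth u g := by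
  intro a b hab
  have nat : ∀ {P Q : E} (f : P ⟶ Q),
      f ≫ adj.unit.app Q = adj.unit.app P ≫ (L ⋙ i).map f :=
    fun f => adj.unit.naturality f
  have key : (adj.unit.app B ≫ inv ((L ⋙ i).map u) ≫ (L ⋙ i).map a) ≫ (L ⋙ i).map g
      = b ≫ adj.unit.app Y := by
    have h1 : (L ⋙ i).map a ≫ (L ⋙ i).map g = (L ⋙ i).map u ≫ (L ⋙ i).map b := by
      rw [← Functor.map_comp, ← Functor.map_comp, hab]
    rw [Category.assoc, Category.assoc, h1, IsIso.inv_hom_id_assoc, ← nat b]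
  refine ⟨hg.lift (adj.unit.app B ≫ inv ((L ⋙ i).map u) ≫ (L ⋙ i).map a) b key,
    ⟨?_, hg.lift_snd ..⟩, ?_⟩
  · apply hg.hom_ext
    · rw [Category.assoc, hg.lift_fst, ← Category.assoc, nat u]
      rw [Category.assoc, IsIso.hom_inv_id_assoc, nat a]
    · rw [Category.assoc, hg.lift_snd, hab]
  · rintro d ⟨hd1, hd2⟩
    apply hg.hom_ext
    · rw [hg.lift_fst, nat d]
      have : (L ⋙ i).map d = inv ((L ⋙ i).map u) ≫ (L ⋙ i).map a := by
        rw [IsIso.eq_inv_comp, ← Functor.map_comp, hd1]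
      rw [this]
    · rw [hg.lift_snd, hd2]
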